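/- For points of the complex projective line, the assignment φ([s₀:s₁],[t₀:t₁]) := [s₀t₀ : s₁t₁ : s₀t₁ + s₁t₀] is a well-defined map ℙ¹(ℂ) × ℙ¹(ℂ) → ℙ²(ℂ) (its three coordinates never vanish simultaneously when (s₀,s₁) ≠ 0 and (t₀,t₁) ≠ 0), it is surjective, and φ(x,y) = φ(x',y') holds if and only if (x,y) = (x',y') or (x,y) = (y',x'). In other words, φ identifies the quotient of ℙ¹(ℂ) × ℙ¹(ℂ) by the swap involution with ℙ²(ℂ). -/

import Mathlib

open Projectivization
open scoped LinearAlgebra.Projectivization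

/-- The coordinate assignment `((s₀,s₁),(t₀,t₁)) ↦ (s₀t₀, s₁t₁, s₀t₁ + s₁t₀)`. -/
def quadCoords (s t : Fin 2 → ℂ) : Fin 3 → ℂ :=
  ![s 0 * t 0, s 1 * t 1, s 0 * t 1 + s 1 * t 0]

lemma ne2 {v : Fin 2 → ℂ} (hv : v ≠ 0) : v 0 ≠ 0 ∨ v 1 ≠ 0 := by
  by_contra h
  push_neg at h
  exact hv (funext fun i => by fin_cases i <;> simp [h.1, h.2])

lemma quadCoords_ne_zero {s t : Fin 2 → ℂ} (hs : s ≠ 0) (ht : t ≠ 0) :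
    quadCoords s t ≠ 0 := by
  intro h
  have h0 : s 0 * t 0 = 0 := by simpa [quadCoords] using congrFun h 0
  have h1 : s 1 * t 1 = 0 := by simpa [quadCoords] using congrFun h 1
  have h2 : s 0 * t 1 + s 1 * t 0 = 0 := by simpa [quadCoords] using congrFun h 2
  rcases mul_eq_zero.mp h0 with hs0 | ht0
  · have hs1 : s 1 ≠ 0 := (ne2 hs).resolve_left (by simp [hs0])
    have ht1 : t 1 = 0 := (mul_eq_zero.mp h1).resolve_left hs1
    have ht0 : t 0 = 0 := by
      have : s 1 * t 0 = 0 := by rw [hs0] at h2; linear_combination h2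
      exact (mul_eq_zero.mp this).resolve_left hs1
    exact ht (funext fun i => by fin_cases i <;> simp [ht0, ht1])
  · have ht1 : t 1 ≠ 0 := (ne2 ht).resolve_left (by simp [ht0])
    have hs1 : s 1 = 0 := (mul_eq_zero.mp h1).resolve_right ht1
    have hs0 : s 0 = 0 := by
      have : s 0 * t 1 = 0 := by rw [ht0, hs1] at h2; linear_combination h2
      exact (mul_eq_zero.mp this).resolve_right ht1
    exact hs (funext fun i => by fin_cases i <;> simp [hs0, hs1])

/-- nonzero vectors in `ℂ²` with vanishing cross product are projectively equal -/
lemma cross_mk {s t : Fin 2 → ℂ} (hs : s ≠ 0) (ht : t ≠ 0)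
    (h : s 0 * t 1 = s 1 * t 0) :
    Projectivization.mk ℂ s hs = Projectivization.mk ℂ t ht := by
  rw [Projectivization.mk_eq_mk_iff']
  rcases ne2 ht with ht0 | ht1
  · refine ⟨s 0 / t 0, funext fun i => ?_⟩
    fin_cases i <;> simp [Pi.smul_apply, smul_eq_mul] <;> field_simp <;>
      first | rfl | linear_combination h | linear_combination -h
  · refine ⟨s 1 / t 1, funext fun i => ?_⟩
    fin_cases i <;> simp [Pi.smul_apply, smul_eq_mul] <;> field_simp <;>
      first | rfl | linear_combination h | linear_combination -h

lemma crossTrans {a b c : Fin 2 → ℂ} (ha : a ≠ 0)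
    (h1 : a 0 * b 1 = a 1 * b 0) (h2 : a 0 * c 1 = a 1 * c 0) :
    b 0 * c 1 = b 1 * c 0 := by
  rcases ne2 ha with h0 | h0
  · apply mul_left_cancel₀ h0
    linear_combination b 0 * h2 - c 0 * h1
  · apply mul_left_cancel₀ h0
    linear_combination b 1 * h2 - c 1 * h1

noncomputable def quadPhi :
    ℙ ℂ (Fin 2 → ℂ) × ℙ ℂ (Fin 2 → ℂ) → ℙ ℂ (Fin 3 → ℂ) := fun p =>
  Projectivization.mk ℂ (quadCoords p.1.rep p.2.rep)
    (quadCoords_ne_zero p.1.rep_nonzero p.2.rep_nonzero)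

lemma quadPhi_mk (s t : Fin 2 → ℂ) (hs : s ≠ 0) (ht : t ≠ 0) :
    quadPhi (Projectivization.mk ℂ s hs, Projectivization.mk ℂ t ht) =
      Projectivization.mk ℂ (quadCoords s t) (quadCoords_ne_zero hs ht) := by
  obtain ⟨a, ha⟩ := Projectivization.exists_smul_eq_mk_rep ℂ s hs
  obtain ⟨b, hb⟩ := Projectivization.exists_smul_eq_mk_rep ℂ t ht
  rw [quadPhi, Projectivization.mk_eq_mk_iff']
  refine ⟨(a : ℂ) * (b : ℂ), funext fun i => ?_⟩
  have ha' := fun i => congrFun ha i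
  have hb' := fun i => congrFun hb i
  simp only [Pi.smul_apply, Units.smul_def, smul_eq_mul] at ha' hb' ⊢
  fin_cases i <;>
    simp only [quadCoords, Matrix.cons_val_zero, Matrix.cons_val_one, Matrix.head_cons,
      Matrix.cons_val_two, Matrix.tail_cons, ← ha' 0, ← ha' 1, ← hb' 0, ← hb' 1] <;>
    simp <;> ring

theorem stmt3 :
    ∃ φ : ℙ ℂ (Fin 2 → ℂ) × ℙ ℂ (Fin 2 → ℂ) → ℙ ℂ (Fin 3 → ℂ),
      (∀ (s t : Fin 2 → ℂ) (hs : s ≠ 0) (ht : t ≠ 0),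
        ∃ h : quadCoords s t ≠ 0,
          φ (Projectivization.mk ℂ s hs, Projectivization.mk ℂ t ht) =
            Projectivization.mk ℂ (quadCoords s t) h) ∧
      Function.Surjective φ ∧
      (∀ x y x' y' : ℙ ℂ (Fin 2 → ℂ),
        φ (x, y) = φ (x', y') ↔ (x, y) = (x', y') ∨ (x, y) = (y', x')) := by
  refine ⟨quadPhi, fun s t hs ht => ⟨quadCoords_ne_zero hs ht, quadPhi_mk s t hs ht⟩, ?_, ?_⟩
  · -- surjectivity
    intro z
    induction z using Projectivization.ind with
    | h w hw =>
    by_cases ha : w 0 ≠ 0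
    · -- find a root r of (w 0) X² - (w 2) X + (w 1)
      obtain ⟨r, hr⟩ := Complex.exists_root (f := Polynomial.C (w 0) * Polynomial.X ^ 2 +
          Polynomial.C (-(w 2)) * Polynomial.X + Polynomial.C (w 1))
        (by rw [Polynomial.degree_quadratic ha]; norm_num)
      have hr' : w 0 * r ^ 2 - w 2 * r + w 1 = 0 := by
        have := hr
        simp only [Polynomial.IsRoot, Polynomial.eval_add, Polynomial.eval_mul,
          Polynomial.eval_pow, Polynomial.eval_C, Polynomial.eval_X] at this
        linear_combination this
      have hs : (![1, r] : Fin 2 → ℂ) ≠ 0 := fun h => by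
        simpa using congrFun h 0
      have ht : (![w 0, w 2 - w 0 * r] : Fin 2 → ℂ) ≠ 0 := fun h => by
        exact ha (by simpa using congrFun h 0)
      refine ⟨(Projectivization.mk ℂ _ hs, Projectivization.mk ℂ _ ht), ?_⟩
      rw [quadPhi_mk]
      rw [Projectivization.mk_eq_mk_iff']
      refine ⟨1, funext fun i => ?_⟩
      fin_cases i
      · simp [quadCoords]
      · simp [quadCoords]
        linear_combination hr'
      · simp [quadCoords]
        ring
    · push_neg at ha
      have hs : (![0, 1] : Fin 2 → ℂ) ≠ 0 := fun h => by simpa using congrFun h 1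
      have ht : (![w 2, w 1] : Fin 2 → ℂ) ≠ 0 := by
        intro h
        apply hw
        funext i
        have h0 := congrFun h 0
        have h1 := congrFun h 1
        simp at h0 h1
        fin_cases i <;> simp [ha, h0, h1]
      refine ⟨(Projectivization.mk ℂ _ hs, Projectivization.mk ℂ _ ht), ?_⟩
      rw [quadPhi_mk, Projectivization.mk_eq_mk_iff']
      refine ⟨1, funext fun i => ?_⟩
      fin_cases i <;> simp [quadCoords, ha]
  · -- the fiber description
    intro x y x' y'
    induction x using Projectivization.ind with | h s hs =>
    induction y using Projectivization.ind with | h t ht =>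
    induction x' using Projectivization.ind with | h u hu =>
    induction y' using Projectivization.ind with | h v hv =>
    constructor
    · intro hphi
      rw [quadPhi_mk, quadPhi_mk, Projectivization.mk_eq_mk_iff] at hphi
      obtain ⟨k, hk⟩ := hphi
      have h1 : (k : ℂ) * (u 0 * v 0) = s 0 * t 0 := by
        simpa [quadCoords, Units.smul_def] using congrFun hk 0
      have h2 : (k : ℂ) * (u 1 * v 1) = s 1 * t 1 := by
        simpa [quadCoords, Units.smul_def] using congrFun hk 1
      have h3 : (k : ℂ) * (u 0 * v 1) + (k : ℂ) * (u 1 * v 0) = s 0 * t 1 + s 1 * t 0 := by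
        simpa [quadCoords, Units.smul_def] using congrFun hk 2
      have hAD : (s 0 * u 1 - s 1 * u 0) * (t 0 * u 1 - t 1 * u 0) = 0 := by
        linear_combination -(u 1 ^ 2) * h1 - (u 0 ^ 2) * h2 + (u 0 * u 1) * h3
      have hBC : (t 0 * v 1 - t 1 * v 0) * (s 0 * v 1 - s 1 * v 0) = 0 := by
        linear_combination -(v 1 ^ 2) * h1 - (v 0 ^ 2) * h2 + (v 0 * v 1) * h3
      have hdisc : (s 0 * t 1 - s 1 * t 0) ^ 2 =
          (k : ℂ) ^ 2 * (u 0 * v 1 - u 1 * v 0) ^ 2 := by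
        linear_combination -(s 0 * t 1 + s 1 * t 0 + (k : ℂ) * (u 0 * v 1 + u 1 * v 0)) * h3
          + 4 * (s 1 * t 1) * h1 + 4 * ((k : ℂ) * (u 0 * v 0)) * h2
      rcases mul_eq_zero.mp hAD with hA | hD <;> rcases mul_eq_zero.mp hBC with hB | hC
      · -- s ∥ u, t ∥ v
        left
        have hA' : s 0 * u 1 = s 1 * u 0 := by linear_combination hA
        have hB' : t 0 * v 1 = t 1 * v 0 := by linear_combination hB
        exact Prod.ext (cross_mk hs hu hA') (cross_mk ht hv hB')
      · -- s ∥ u, s ∥ v : degenerate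
        have hA' : s 0 * u 1 = s 1 * u 0 := by linear_combination hA
        have hC' : s 0 * v 1 = s 1 * v 0 := by linear_combination hC
        have huv : u 0 * v 1 = u 1 * v 0 := crossTrans hs hA' hC'
        have hst : s 0 * t 1 = s 1 * t 0 := by
          have : (s 0 * t 1 - s 1 * t 0) ^ 2 = 0 := by
            rw [hdisc]; rw [sub_eq_zero.mpr huv]; ring
          exact sub_eq_zero.mp (pow_eq_zero_iff two_ne_zero |>.mp this)
        left
        refine Prod.ext (cross_mk hs hu hA') ?_
        have h1 : Projectivization.mk ℂ t ht = Projectivization.mk ℂ s hs :=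
          cross_mk ht hs (by linear_combination -hst)
        exact h1.trans (cross_mk hs hv hC')
      · -- t ∥ u, t ∥ v : degenerate
        have hD' : t 0 * u 1 = t 1 * u 0 := by linear_combination hD
        have hB' : t 0 * v 1 = t 1 * v 0 := by linear_combination hB
        have huv : u 0 * v 1 = u 1 * v 0 := crossTrans ht hD' hB'
        have hst : s 0 * t 1 = s 1 * t 0 := by
          have : (s 0 * t 1 - s 1 * t 0) ^ 2 = 0 := by
            rw [hdisc]; rw [sub_eq_zero.mpr huv]; ring
          exact sub_eq_zero.mp (pow_eq_zero_iff two_ne_zero |>.mp this)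
        left
        refine Prod.ext ?_ (cross_mk ht hv hB')
        exact (cross_mk hs ht hst).trans (cross_mk ht hu hD')
      · -- s ∥ v, t ∥ u : swap
        right
        have hD' : t 0 * u 1 = t 1 * u 0 := by linear_combination hD
        have hC' : s 0 * v 1 = s 1 * v 0 := by linear_combination hC
        exact Prod.ext (cross_mk hs hv hC') (cross_mk ht hu hD')
    · rintro (h | h)
      · rw [h]
      · have hx : Projectivization.mk ℂ s hs = Projectivization.mk ℂ v hv :=
          congrArg Prod.fst h
        have hy : Projectivization.mk ℂ t ht = Projectivization.mk ℂ u hu :=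
          congrArg Prod.snd h
        rw [hx, hy, quadPhi_mk, quadPhi_mk, Projectivization.mk_eq_mk_iff']
        refine ⟨1, funext fun i => ?_⟩
        fin_cases i <;> simp [quadCoords] <;> ring
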